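/- Let M be an EC-free MDP in reachability form, λ ∈ ℝ^k, and let H(λ) be the polyhedron of y ∈ ℝ^E with y ≥ 0, Aᵀ y ≤ δ_in, Tᵀ y ≥ λ. For a subset S' ⊆ S, there exists y ∈ H(λ) whose state-support {s : ∃a, y(s,a) > 0} is contained in S' if and only if there exists a scheduler σ' of the induced subsystem M_{S'} with Pr_{M_{S'}}^{σ'}(◇G_i) ≥ λ_i for all i ∈ [k]. -/

import Mathlib

open Finset


set_option linter.unusedSectionVars false
namespace FarkasAux

attribute [local instance] Classical.propDecidable

variable {n ι : Type} [Fintype n] [Fintype ι]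

/-- The cone generated by a finite family of vectors. -/
def coneOf (v : ι → (n → ℝ)) : Set (n → ℝ) :=
  {x | ∃ t : ι → ℝ, (∀ i, 0 ≤ t i) ∧ x = ∑ i, t i • v i}

lemma zero_mem_coneOf (v : ι → (n → ℝ)) : (0 : n → ℝ) ∈ coneOf v :=
  ⟨0, fun _ => le_refl _, by simp⟩

lemma gen_mem_coneOf (v : ι → (n → ℝ)) (k : ι) : v k ∈ coneOf v := by
  refine ⟨fun i => if i = k then 1 else 0, fun i => by positivity, ?_⟩
  simp [ite_smul]

lemma smul_mem_coneOf {v : ι → (n → ℝ)} {x : n → ℝ} (hx : x ∈ coneOf v) {m : ℝ}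
    (hm : 0 ≤ m) : m • x ∈ coneOf v := by
  obtain ⟨t, ht0, rfl⟩ := hx
  exact ⟨fun i => m * t i, fun i => mul_nonneg hm (ht0 i), by
    rw [Finset.smul_sum]; exact Finset.sum_congr rfl fun i _ => (mul_smul m (t i) (v i)).symm⟩

lemma convex_coneOf (v : ι → (n → ℝ)) : Convex ℝ (coneOf v) := by
  rintro x ⟨t, ht0, rfl⟩ y ⟨u, hu0, rfl⟩ a b ha hb _
  refine ⟨fun i => a * t i + b * u i,
    fun i => add_nonneg (mul_nonneg ha (ht0 i)) (mul_nonneg hb (hu0 i)), ?_⟩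
  rw [Finset.smul_sum, Finset.smul_sum, ← Finset.sum_add_distrib]
  exact Finset.sum_congr rfl fun i _ => by rw [add_smul, mul_smul, mul_smul]

/-- Conic Carathéodory: every element of the cone has a representation supported on a
linearly independent subfamily. -/
lemma exists_linIndep_rep (v : ι → (n → ℝ)) {x : n → ℝ} (hx : x ∈ coneOf v) :
    ∃ T : Finset ι, (LinearIndependent ℝ (fun i : T => v i)) ∧
      ∃ t : ι → ℝ, (∀ i, 0 ≤ t i) ∧ (∀ i ∉ T, t i = 0) ∧ x = ∑ i, t i • v i := by
  obtain ⟨t, ht0, rfl⟩ := hx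
  suffices H : ∀ N : ℕ, ∀ t : ι → ℝ, (Finset.univ.filter fun i => t i ≠ 0).card ≤ N →
      (∀ i, 0 ≤ t i) →
      ∃ T : Finset ι, (LinearIndependent ℝ (fun i : T => v i)) ∧
        ∃ t' : ι → ℝ, (∀ i, 0 ≤ t' i) ∧ (∀ i ∉ T, t' i = 0) ∧
          ∑ i, t i • v i = ∑ i, t' i • v i by
    obtain ⟨T, h1, t', h2, h3, h4⟩ := H _ t le_rfl ht0
    exact ⟨T, h1, t', h2, h3, h4⟩
  intro N
  induction N with
  | zero =>
    intro t hcard ht0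
    refine ⟨∅, linearIndependent_empty_type, t, ht0, fun i _ => ?_, rfl⟩
    by_contra h
    have hi : i ∈ Finset.univ.filter fun i => t i ≠ 0 := by simp [h]
    have := Finset.card_pos.mpr ⟨i, hi⟩
    omega
  | succ N ih =>
    intro t hcard ht0
    set T : Finset ι := Finset.univ.filter fun i => t i ≠ 0 with hT
    by_cases hli : LinearIndependent ℝ (fun i : T => v i)
    · exact ⟨T, hli, t, ht0, fun i hi => by
        by_contra h; exact hi (by simp [hT, h]), rfl⟩
    · obtain ⟨g, hg0, i₁, hi₁⟩ := Fintype.not_linearIndependent_iff.mp hli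
      set c : ι → ℝ := fun i => if h : i ∈ T then g ⟨i, h⟩ else 0 with hc
      have hcsum : ∑ i, c i • v i = 0 := by
        rw [← Finset.sum_subset (Finset.subset_univ T) (fun i _ hi => by
          simp [hc, dif_neg hi])]
        rw [← Finset.sum_attach T fun i => c i • v i, ← hg0]
        exact Finset.sum_congr rfl fun i _ => by simp [hc, i.2]
      have hcsupp : ∀ i ∉ T, c i = 0 := fun i hi => by simp [hc, dif_neg hi]
      have key : ∀ c : ι → ℝ, (∑ i, c i • v i = 0) → (∀ i ∉ T, c i = 0) →
          (∃ i, 0 < c i) →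
          ∃ T' : Finset ι, (LinearIndependent ℝ (fun i : T' => v i)) ∧
            ∃ t' : ι → ℝ, (∀ i, 0 ≤ t' i) ∧ (∀ i ∉ T', t' i = 0) ∧
              ∑ i, t i • v i = ∑ i, t' i • v i := by
        intro c hcsum hcsupp ⟨j, hj⟩
        have hPne : (Finset.univ.filter fun i => 0 < c i).Nonempty := ⟨j, by simp [hj]⟩
        obtain ⟨i₀, hi₀P, hi₀min⟩ :=
          Finset.exists_min_image _ (fun i => t i / c i) hPne
        have hci₀ : 0 < c i₀ := (Finset.mem_filter.mp hi₀P).2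
        set α : ℝ := t i₀ / c i₀ with hα
        have hα0 : 0 ≤ α := div_nonneg (ht0 i₀) hci₀.le
        set t' : ι → ℝ := fun i => t i - α * c i with ht'
        have ht'0 : ∀ i, 0 ≤ t' i := by
          intro i
          by_cases hci : 0 < c i
          · have := hi₀min i (by simp [hci])
            have : α * c i ≤ t i := by
              rw [hα]
              calc t i₀ / c i₀ * c i ≤ t i / c i * c i := by
                    exact mul_le_mul_of_nonneg_right this hci.le
                _ = t i := div_mul_cancel₀ _ hci.ne'
            simpa [ht'] using this
          · push_neg at hci
            have : α * c i ≤ 0 := mul_nonpos_of_nonneg_of_nonpos hα0 hci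
            simp only [ht', sub_nonneg]
            exact le_trans this (ht0 i)
        have hsum' : ∑ i, t i • v i = ∑ i, t' i • v i := by
          simp only [ht', sub_smul, Finset.sum_sub_distrib]
          rw [show ∑ i, (α * c i) • v i = α • ∑ i, c i • v i by
            rw [Finset.smul_sum]; exact Finset.sum_congr rfl fun i _ => mul_smul _ _ _]
          rw [hcsum, smul_zero, sub_zero]
        have hi₀T : i₀ ∈ T := by
          by_contra h
          exact absurd (hcsupp i₀ h) hci₀.ne'
        have hsupp' : (Finset.univ.filter fun i => t' i ≠ 0) ⊆ T.erase i₀ := by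
          intro i hi
          simp only [Finset.mem_filter] at hi
          refine Finset.mem_erase.mpr ⟨?_, ?_⟩
          · rintro rfl
            exact hi.2 (by simp [ht', hα, div_mul_cancel₀ _ hci₀.ne'])
          · by_contra h
            exact hi.2 (by simp [ht', ht0, hcsupp i h, hT,
              show t i = 0 by by_contra h'; exact h (by simp [hT, h'])])
        have hcard' : (Finset.univ.filter fun i => t' i ≠ 0).card ≤ N := by
          have h1 := Finset.card_le_card hsupp'
          have h2 : (T.erase i₀).card = T.card - 1 := Finset.card_erase_of_mem hi₀T
          have h3 : 0 < T.card := Finset.card_pos.mpr ⟨i₀, hi₀T⟩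
          omega
        obtain ⟨T', h1, t'', h2, h3, h4⟩ := ih t' hcard' ht'0
        exact ⟨T', h1, t'', h2, h3, hsum'.trans h4⟩
      by_cases hpos : ∃ i, 0 < c i
      · exact key c hcsum hcsupp hpos
      · push_neg at hpos
        refine key (fun i => -c i) (by simpa [neg_smul] using congrArg Neg.neg hcsum)
          (fun i hi => by simp [hcsupp i hi]) ?_
        have : c i₁ ≠ 0 := by simpa [hc, i₁.2] using hi₁
        exact ⟨i₁, by simp only [neg_pos]; exact lt_of_le_of_ne (hpos i₁) this⟩



lemma isClosed_coneOf (v : ι → (n → ℝ)) : IsClosed (coneOf v) := by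
  -- the cone is the union of cones on linearly independent subfamilies
  have hdecomp : coneOf v =
      ⋃ T : {T : Finset ι // LinearIndependent ℝ (fun i : T => v i)},
        {x | ∃ t : ι → ℝ, (∀ i, 0 ≤ t i) ∧ (∀ i ∉ T.1, t i = 0) ∧ x = ∑ i, t i • v i} := by
    ext x
    constructor
    · intro hx
      obtain ⟨T, hli, t, h1, h2, h3⟩ := exists_linIndep_rep v hx
      exact Set.mem_iUnion.mpr ⟨⟨T, hli⟩, t, h1, h2, h3⟩
    · intro hx
      obtain ⟨T, t, h1, _, h3⟩ := Set.mem_iUnion.mp hx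
      exact ⟨t, h1, h3⟩
  rw [hdecomp]
  apply isClosed_iUnion_of_finite
  rintro ⟨T, hli⟩
  -- this set is the image of the nonnegative orthant under an injective linear map
  set L : (T → ℝ) →ₗ[ℝ] (n → ℝ) := Fintype.linearCombination ℝ (fun i : T => v i) with hL
  have hLapp : ∀ u : T → ℝ, L u = ∑ i : T, u i • v i := fun u => rfl
  have hinj : LinearMap.ker L = ⊥ := by
    rw [LinearMap.ker_eq_bot']
    intro u hu
    rw [hLapp] at hu
    funext i
    exact Fintype.linearIndependent_iff.mp hli u hu i
  have himg : {x : n → ℝ | ∃ t : ι → ℝ, (∀ i, 0 ≤ t i) ∧ (∀ i ∉ T, t i = 0) ∧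
      x = ∑ i, t i • v i} = L '' {u | ∀ i, 0 ≤ u i} := by
    ext x
    constructor
    · rintro ⟨t, h1, h2, rfl⟩
      refine ⟨fun i => t i, fun i => h1 i, ?_⟩
      rw [hLapp]
      rw [← Finset.sum_subset (Finset.subset_univ T) (fun i _ hi => by simp [h2 i hi])]
      exact (Finset.sum_attach T fun i => t i • v i)
    · rintro ⟨u, hu, rfl⟩
      refine ⟨fun i => if h : i ∈ T then u ⟨i, h⟩ else 0,
        fun i => by by_cases h : i ∈ T <;> simp [h, hu ⟨i, _⟩], fun i hi => by simp [hi], ?_⟩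
      rw [hLapp]
      rw [← Finset.sum_subset (Finset.subset_univ T) (fun i _ hi => by simp [hi])]
      rw [← Finset.sum_attach T fun i => (if h : (i : ι) ∈ T then u ⟨i, h⟩ else 0) • v i]
      exact Finset.sum_congr rfl fun i _ => by simp [i.2]
  rw [himg]
  have hclosed : IsClosed {u : T → ℝ | ∀ i, 0 ≤ u i} := by
    have : {u : T → ℝ | ∀ i, 0 ≤ u i} = ⋂ i, {u | 0 ≤ u i} := by ext u; simp [Set.mem_iInter]
    rw [this]
    exact isClosed_iInter fun i => isClosed_le continuous_const (continuous_apply i)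
  exact (LinearMap.isClosedEmbedding_of_injective hinj).isClosedMap _ hclosed

/-- Farkas' lemma (one direction): if the system `y ≥ 0`, `B y ≤ c` is infeasible then
there is a nonnegative dual witness. -/
theorem farkas {J I : Type} [Fintype J] [Fintype I] (B : J → I → ℝ) (c : J → ℝ)
    (h : ¬ ∃ y : I → ℝ, (∀ i, 0 ≤ y i) ∧ ∀ j, ∑ i, B j i * y i ≤ c j) :
    ∃ x : J → ℝ, (∀ j, 0 ≤ x j) ∧ (∀ i, 0 ≤ ∑ j, x j * B j i) ∧ ∑ j, x j * c j < 0 := by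
  set v : I ⊕ J → (J → ℝ) := Sum.elim (fun i => fun j => B j i) (fun j => Pi.single j 1) with hv
  have hc : c ∉ coneOf v := by
    rintro ⟨t, ht0, htc⟩
    refine h ⟨fun i => t (Sum.inl i), fun i => ht0 _, fun j => ?_⟩
    have := congrFun htc j
    rw [Finset.sum_apply] at this
    simp only [Pi.smul_apply, smul_eq_mul] at this
    rw [Fintype.sum_sum_type] at this
    have hsingle : ∑ j' : J, t (Sum.inr j') * v (Sum.inr j') j = t (Sum.inr j) := by
      simp only [hv, Sum.elim_inr, Pi.single_apply]
      rw [Finset.sum_congr rfl fun j' _ => by rw [mul_ite, mul_one, mul_zero]]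
      simp
    rw [hsingle] at this
    have : c j = ∑ i, B j i * t (Sum.inl i) + t (Sum.inr j) := by
      rw [this]; congr 1; exact Finset.sum_congr rfl fun i _ => by simp [hv, mul_comm]
    have h2 := ht0 (Sum.inr j)
    linarith [le_of_eq this.symm]
  obtain ⟨f, u, hfs, hfc⟩ :=
    geometric_hahn_banach_closed_point (convex_coneOf v) (isClosed_coneOf v) hc
  have hu0 : 0 < u := by
    have := hfs 0 (zero_mem_coneOf v)
    simpa using this
  have hfz : ∀ z ∈ coneOf v, f z ≤ 0 := by
    intro z hz
    by_contra hpos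
    push_neg at hpos
    have hm : 0 ≤ (u + 1) / f z := div_nonneg (by linarith) hpos.le
    have := hfs _ (smul_mem_coneOf hz hm)
    rw [map_smul, smul_eq_mul, div_mul_cancel₀ _ hpos.ne'] at this
    linarith
  have hrep : ∀ w : J → ℝ, f w = ∑ j, w j * f (Pi.single j 1) := by
    intro w
    conv_lhs => rw [← Finset.univ_sum_single w]
    rw [map_sum]
    exact Finset.sum_congr rfl fun j _ => by
      rw [show (Pi.single j (w j) : J → ℝ) = w j • (Pi.single j (1:ℝ) : J → ℝ) by
        funext j'; by_cases h : j' = j <;> simp [h, Pi.single_apply], map_smul, smul_eq_mul]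
  refine ⟨fun j => -f (Pi.single j 1), fun j => ?_, fun i => ?_, ?_⟩
  · have := hfz (v (Sum.inr j)) (gen_mem_coneOf v (Sum.inr j))
    simp only [hv, Sum.elim_inr] at this
    dsimp only
    linarith
  · have := hfz (v (Sum.inl i)) (gen_mem_coneOf v (Sum.inl i))
    rw [hrep] at this
    simp only [hv, Sum.elim_inl] at this
    have heq : ∑ j, (fun j => -f (Pi.single j 1)) j * B j i
        = -∑ j, B j i * f (Pi.single j 1) := by
      rw [← Finset.sum_neg_distrib]
      exact Finset.sum_congr rfl fun j _ => by ring
    rw [heq]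
    linarith
  · have : f c = ∑ j, c j * f (Pi.single j 1) := hrep c
    have heq : ∑ j, (fun j => -f (Pi.single j 1)) j * c j
        = -∑ j, c j * f (Pi.single j 1) := by
      rw [← Finset.sum_neg_distrib]
      exact Finset.sum_congr rfl fun j _ => by ring
    rw [heq]
    linarith

end FarkasAux


-- MDPLEMMAS

structure MDP (S A : Type) [Fintype S] [Fintype A] where
  init : S
  trans : S → A → Option (S → ℝ)
  nonneg' : ∀ s a f, trans s a = some f → ∀ t, 0 ≤ f t
  sum_one' : ∀ s a f, trans s a = some f → ∑ t, f t = 1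
  exists_enabled : ∀ s, ∃ a, (trans s a).isSome

namespace MDP

variable {S A : Type} [Fintype S] [Fintype A]

/-- action `a` is enabled in state `s`. -/
def enabled (M : MDP S A) (s : S) (a : A) : Prop := (M.trans s a).isSome

/-- transition probability (0 if the action is not enabled). -/
noncomputable def prob (M : MDP S A) (s : S) (a : A) (t : S) : ℝ :=
  ((M.trans s a).getD 0) t

/-- A (history-dependent, randomized) scheduler. -/
structure Scheduler (M : MDP S A) where
  choice : List (S × A) → S → A → ℝ
  choice_nonneg : ∀ h s a, 0 ≤ choice h s a
  choice_sum_one : ∀ h s, ∑ a, choice h s a = 1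
  choice_support : ∀ h s a, choice h s a ≠ 0 → M.enabled s a

variable [DecidableEq S]

/-- probability of reaching `G` within `n` steps, from history `h` and current state `s`. -/
noncomputable def reachAux (M : MDP S A) (σ : Scheduler M) (G : Finset S) :
    ℕ → List (S × A) → S → ℝ
  | 0, _, s => if s ∈ G then 1 else 0
  | n + 1, h, s =>
      if s ∈ G then 1
      else ∑ a : A, σ.choice h s a * ∑ t : S, M.prob s a t * reachAux M σ G n (h ++ [(s, a)]) t

/-- probability of eventually reaching `G`, starting in `s`. -/
noncomputable def prReachFrom (M : MDP S A) (σ : Scheduler M) (G : Finset S) (s : S) : ℝ :=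
  ⨆ n : ℕ, reachAux M σ G n [] s

/-- probability of eventually reaching `G` from the initial state. -/
noncomputable def prReach (M : MDP S A) (σ : Scheduler M) (G : Finset S) : ℝ :=
  prReachFrom M σ G M.init

/-- probability of staying in `G` for the first `n` steps. -/
noncomputable def invAux (M : MDP S A) (σ : Scheduler M) (G : Finset S) :
    ℕ → List (S × A) → S → ℝ
  | 0, _, s => if s ∈ G then 1 else 0
  | n + 1, h, s =>
      if s ∈ G then
        ∑ a : A, σ.choice h s a * ∑ t : S, M.prob s a t * invAux M σ G n (h ++ [(s, a)]) t
      else 0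

/-- probability of always remaining in `G`, from the initial state. -/
noncomputable def prInv (M : MDP S A) (σ : Scheduler M) (G : Finset S) : ℝ :=
  ⨅ n : ℕ, invAux M σ G n [] M.init

/-- expected total reward collected in the first `n` steps. -/
noncomputable def expTotal (M : MDP S A) (σ : Scheduler M) (r : S → A → ℝ) :
    ℕ → List (S × A) → S → ℝ
  | 0, _, _ => 0
  | n + 1, h, s =>
      ∑ a : A, σ.choice h s a *
        (r s a + ∑ t : S, M.prob s a t * expTotal M σ r n (h ++ [(s, a)]) t)

/-- expected (liminf) mean payoff under scheduler `σ`. -/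
noncomputable def expMPinf (M : MDP S A) (σ : Scheduler M) (r : S → A → ℝ) : ℝ :=
  Filter.liminf (fun n : ℕ => expTotal M σ r n [] M.init / n) Filter.atTop

/-- expected (limsup) mean payoff under scheduler `σ`. -/
noncomputable def expMPsup (M : MDP S A) (σ : Scheduler M) (r : S → A → ℝ) : ℝ :=
  Filter.limsup (fun n : ℕ => expTotal M σ r n [] M.init / n) Filter.atTop


attribute [local instance] Classical.propDecidable
set_option linter.unusedSectionVars false


lemma prob_nonneg (M : MDP S A) (s : S) (a : A) (t : S) : 0 ≤ M.prob s a t := by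
  unfold prob
  cases h : M.trans s a with
  | none => simp
  | some f => simpa using M.nonneg' s a f h t

lemma sum_prob (M : MDP S A) {s : S} {a : A} (h : M.enabled s a) :
    ∑ t, M.prob s a t = 1 := by
  unfold enabled at h
  obtain ⟨f, hf⟩ := Option.isSome_iff_exists.mp h
  unfold prob
  rw [hf]
  simpa using M.sum_one' s a f hf

lemma prob_eq_zero_of_not_enabled (M : MDP S A) {s : S} {a : A} (h : ¬ M.enabled s a)
    (t : S) : M.prob s a t = 0 := by
  unfold enabled at h
  rw [Option.not_isSome_iff_eq_none] at h
  unfold prob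
  rw [h]
  simp

lemma sum_prob_le_one (M : MDP S A) (s : S) (a : A) : ∑ t, M.prob s a t ≤ 1 := by
  by_cases h : M.enabled s a
  · rw [M.sum_prob h]
  · simp [M.prob_eq_zero_of_not_enabled h]

lemma prob_eq_zero_of_prob_eq_one (M : MDP S A) {s : S} {a : A} {t : S}
    (h : M.enabled s a) (h1 : M.prob s a t = 1) : ∀ u, u ≠ t → M.prob s a u = 0 := by
  intro u hu
  have hsum := M.sum_prob h
  rw [← Finset.add_sum_erase _ _ (Finset.mem_univ t), h1] at hsum
  have hz : ∑ u ∈ Finset.univ.erase t, M.prob s a u = 0 := by linarith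
  exact (Finset.sum_eq_zero_iff_of_nonneg fun u _ => M.prob_nonneg s a u).mp hz u
    (Finset.mem_erase.mpr ⟨hu, Finset.mem_univ u⟩)

variable [DecidableEq S]

lemma reachAux_nonneg (M : MDP S A) (σ : Scheduler M) (G : Finset S) :
    ∀ n h s, 0 ≤ reachAux M σ G n h s := by
  intro n
  induction n with
  | zero => intro h s; simp only [reachAux]; split <;> norm_num
  | succ n ih =>
    intro h s
    simp only [reachAux]
    split
    · norm_num
    · refine Finset.sum_nonneg fun a _ => mul_nonneg (σ.choice_nonneg h s a) ?_
      exact Finset.sum_nonneg fun t _ => mul_nonneg (M.prob_nonneg s a t) (ih _ t)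

lemma reachAux_le_one (M : MDP S A) (σ : Scheduler M) (G : Finset S) :
    ∀ n h s, reachAux M σ G n h s ≤ 1 := by
  intro n
  induction n with
  | zero => intro h s; simp only [reachAux]; split <;> norm_num
  | succ n ih =>
    intro h s
    simp only [reachAux]
    split
    · exact le_refl 1
    · calc ∑ a, σ.choice h s a * ∑ t, M.prob s a t * reachAux M σ G n (h ++ [(s, a)]) t
          ≤ ∑ a, σ.choice h s a * 1 := by
            refine Finset.sum_le_sum fun a _ => ?_
            rcases eq_or_ne (σ.choice h s a) 0 with h0 | h0
            · simp [h0]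
            · refine mul_le_mul_of_nonneg_left ?_ (σ.choice_nonneg h s a)
              calc ∑ t, M.prob s a t * reachAux M σ G n (h ++ [(s, a)]) t
                  ≤ ∑ t, M.prob s a t * 1 := Finset.sum_le_sum fun t _ =>
                    mul_le_mul_of_nonneg_left (ih _ t) (M.prob_nonneg s a t)
                _ = ∑ t, M.prob s a t := by simp
                _ ≤ 1 := M.sum_prob_le_one s a
        _ = 1 := by simp [σ.choice_sum_one h s]

lemma reachAux_le_succ (M : MDP S A) (σ : Scheduler M) (G : Finset S) :
    ∀ n h s, reachAux M σ G n h s ≤ reachAux M σ G (n + 1) h s := by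
  intro n
  induction n with
  | zero =>
    intro h s
    simp only [reachAux]
    split
    · exact le_refl 1
    · exact Finset.sum_nonneg fun a _ => mul_nonneg (σ.choice_nonneg h s a)
        (Finset.sum_nonneg fun t _ => mul_nonneg (M.prob_nonneg s a t)
          (M.reachAux_nonneg σ G 0 (h ++ [(s,a)]) t))
  | succ n ih =>
    intro h s
    simp only [reachAux]
    split
    · exact le_refl 1
    · refine Finset.sum_le_sum fun a _ => mul_le_mul_of_nonneg_left ?_ (σ.choice_nonneg h s a)
      exact Finset.sum_le_sum fun t _ =>
        mul_le_mul_of_nonneg_left (ih _ t) (M.prob_nonneg s a t)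

lemma reachAux_of_mem (M : MDP S A) (σ : Scheduler M) (G : Finset S) {s : S}
    (hs : s ∈ G) : ∀ n h, reachAux M σ G n h s = 1 := by
  intro n h
  cases n <;> simp [reachAux, hs]

lemma bddAbove_reachAux (M : MDP S A) (σ : Scheduler M) (G : Finset S) (s : S) :
    BddAbove (Set.range fun n => reachAux M σ G n [] s) := by
  refine ⟨1, ?_⟩
  rintro _ ⟨n, rfl⟩
  exact M.reachAux_le_one σ G n [] s

lemma reachAux_le_prReachFrom (M : MDP S A) (σ : Scheduler M) (G : Finset S) (s : S)
    (n : ℕ) : reachAux M σ G n [] s ≤ prReachFrom M σ G s :=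
  le_ciSup (M.bddAbove_reachAux σ G s) n

lemma prReachFrom_nonneg (M : MDP S A) (σ : Scheduler M) (G : Finset S) (s : S) :
    0 ≤ prReachFrom M σ G s :=
  le_trans (M.reachAux_nonneg σ G 0 [] s) (M.reachAux_le_prReachFrom σ G s 0)

lemma tendsto_reachAux (M : MDP S A) (σ : Scheduler M) (G : Finset S) (s : S) :
    Filter.Tendsto (fun n => reachAux M σ G n [] s) Filter.atTop
      (nhds (prReachFrom M σ G s)) :=
  tendsto_atTop_ciSup (monotone_nat_of_le_succ fun n => M.reachAux_le_succ σ G n [] s)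
    (M.bddAbove_reachAux σ G s)

lemma reachAux_hist_irrel (M : MDP S A) (σ : Scheduler M) (G : Finset S)
    (hσ : ∀ h h' s a, σ.choice h s a = σ.choice h' s a) :
    ∀ n h h' s, reachAux M σ G n h s = reachAux M σ G n h' s := by
  intro n
  induction n with
  | zero => intro h h' s; simp [reachAux]
  | succ n ih =>
    intro h h' s
    simp only [reachAux]
    split
    · rfl
    · refine Finset.sum_congr rfl fun a _ => ?_
      rw [hσ h h' s a]
      congr 1
      exact Finset.sum_congr rfl fun t _ => by rw [ih (h ++ [(s, a)]) (h' ++ [(s, a)]) t]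


/-- `M'` (with fresh sink `⊥ = none`) is a subsystem of `M` with state set `S' ∪ {⊥}`. -/
def IsSubsystem (M : MDP S A) (S' : Finset S) (M' : MDP (Option S) A) : Prop :=
  M.init ∈ S' ∧ M'.init = some M.init ∧
  (∀ a, M'.enabled none a → ∀ t, M'.prob none a t = if t = none then 1 else 0) ∧
  (∀ s ∈ S', ∀ a, (M'.enabled (some s) a ↔ M.enabled s a)) ∧
  (∀ s ∈ S', ∀ t ∈ S', ∀ a,
    M'.prob (some s) a (some t) = M.prob s a t ∨ M'.prob (some s) a (some t) = 0) ∧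
  (∀ s ∈ S', ∀ t, t ∉ S' → ∀ a, M'.prob (some s) a (some t) = 0)

/-- `M'` is the subsystem of `M` induced by `S'`: transitions leaving `S'` are
redirected to the absorbing sink `⊥ = none`. -/
def IsInducedSubsystem (M : MDP S A) (S' : Finset S) (M' : MDP (Option S) A) : Prop :=
  M.init ∈ S' ∧ M'.init = some M.init ∧
  (∀ a, M'.enabled none a → ∀ t, M'.prob none a t = if t = none then 1 else 0) ∧
  (∀ s ∈ S', ∀ a, (M'.enabled (some s) a ↔ M.enabled s a)) ∧
  (∀ s ∈ S', ∀ t ∈ S', ∀ a, M'.prob (some s) a (some t) = M.prob s a t) ∧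
  (∀ s ∈ S', ∀ t, t ∉ S' → ∀ a, M'.prob (some s) a (some t) = 0) ∧
  (∀ s ∈ S', ∀ a, M.enabled s a → M'.prob (some s) a none = ∑ t ∈ S'ᶜ, M.prob s a t)

/-- `C` is an end component of `M`. -/
def IsEC (M : MDP S A) (C : Finset (S × A)) : Prop :=
  C.Nonempty ∧ (∀ p ∈ C, M.enabled p.1 p.2) ∧
  (∀ p ∈ C, ∀ t, 0 < M.prob p.1 p.2 t → t ∈ C.image Prod.fst) ∧
  (∀ s ∈ C.image Prod.fst, ∀ t ∈ C.image Prod.fst,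
    Relation.ReflTransGen (fun u v => ∃ a, (u, a) ∈ C ∧ 0 < M.prob u a v) s t)

end MDP

/-- positive boolean combinations of lower-bounded reachability and invariance
predicates; the flag `strict` distinguishes `>` from `≥`. -/
inductive MOProp (S : Type) where
  | reach (G : Finset S) (lam : ℝ) (strict : Bool)
  | invar (G : Finset S) (lam : ℝ) (strict : Bool)
  | conj (p q : MOProp S)
  | disj (p q : MOProp S)

namespace MDP

variable {S A : Type} [Fintype S] [Fintype A] [DecidableEq S]

/-- satisfaction of a multi-objective property in `M` under `σ`. -/
def Sat (M : MDP S A) (σ : Scheduler M) : MOProp S → Prop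
  | .reach G lam strict => if strict then lam < prReach M σ G else lam ≤ prReach M σ G
  | .invar G lam strict => if strict then lam < prInv M σ G else lam ≤ prInv M σ G
  | .conj p q => Sat M σ p ∧ Sat M σ q
  | .disj p q => Sat M σ p ∨ Sat M σ q

/-- satisfaction of a multi-objective property (over the original state space) in a
subsystem `M'` with sink `⊥ = none`. -/
def SatSub (M' : MDP (Option S) A) (σ : Scheduler M') : MOProp S → Prop
  | .reach G lam strict =>
      if strict then lam < prReach M' σ (G.image some) else lam ≤ prReach M' σ (G.image some)
  | .invar G lam strict =>
      if strict then lam < prInv M' σ (G.image some) else lam ≤ prInv M' σ (G.image some)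
  | .conj p q => SatSub M' σ p ∧ SatSub M' σ q
  | .disj p q => SatSub M' σ p ∨ SatSub M' σ q

end MDP

namespace MDP

attribute [local instance] Classical.propDecidable
set_option linter.unusedSectionVars false
set_option maxHeartbeats 1000000

variable {S A : Type} [Fintype S] [Fintype A] [DecidableEq S]

lemma sink_reachAux_zero {M : MDP S A} {W : Finset S} {M' : MDP (Option S) A}
    (hsub : IsInducedSubsystem M W M') (σ' : Scheduler M') (G : Finset S) :
    ∀ n h, reachAux M' σ' (G.image some) n h none = 0 := by
  have hnone : (none : Option S) ∉ G.image some := by simp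
  intro n
  induction n with
  | zero => intro h; simp [reachAux, hnone]
  | succ n ih =>
    intro h
    simp only [reachAux, if_neg hnone]
    refine Finset.sum_eq_zero fun a _ => ?_
    rcases eq_or_ne (σ'.choice h none a) 0 with h0 | h0
    · simp [h0]
    · have hen := σ'.choice_support h none a h0
      have hprob := hsub.2.2.1 a hen
      have : ∑ t, M'.prob none a t * reachAux M' σ' (G.image some) n (h ++ [(none, a)]) t
          = reachAux M' σ' (G.image some) n (h ++ [(none, a)]) none := by
        rw [Finset.sum_congr rfl fun t _ => by rw [hprob t]]
        simp [ite_mul]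
      rw [this, ih]
      simp

lemma absorb_reachAux_zero {M : MDP S A} {W : Finset S} {M' : MDP (Option S) A}
    (hsub : IsInducedSubsystem M W M') (σ' : Scheduler M') (G : Finset S) {s : S}
    (hsW : s ∈ W) (hab : ∀ a, M.enabled s a → M.prob s a s = 1) (hsG : s ∉ G) :
    ∀ n h, reachAux M' σ' (G.image some) n h (some s) = 0 := by
  have hmem : (some s : Option S) ∉ G.image some := by simp [hsG]
  intro n
  induction n with
  | zero => intro h; simp [reachAux, hmem]
  | succ n ih =>
    intro h
    simp only [reachAux, if_neg hmem]
    refine Finset.sum_eq_zero fun a _ => ?_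
    rcases eq_or_ne (σ'.choice h (some s) a) 0 with h0 | h0
    · simp [h0]
    · have hen' := σ'.choice_support h (some s) a h0
      have hen : M.enabled s a := (hsub.2.2.2.1 s hsW a).mp hen'
      have hprob1 : M'.prob (some s) a (some s) = 1 := by
        rw [hsub.2.2.2.2.1 s hsW s hsW a]
        exact hab a hen
      have hz := M'.prob_eq_zero_of_prob_eq_one hen' hprob1
      have : ∑ t, M'.prob (some s) a t * reachAux M' σ' (G.image some) n
            (h ++ [(some s, a)]) t
          = reachAux M' σ' (G.image some) n (h ++ [(some s, a)]) (some s) := by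
        rw [Finset.sum_eq_single (some s)]
        · rw [hprob1, one_mul]
        · intro t _ ht
          rw [hz t ht, zero_mul]
        · intro habs'
          exact absurd (Finset.mem_univ _) habs'
      rw [this, ih]
      simp

/-- Forward direction: a certificate with support in `S'` yields a scheduler of any
induced subsystem. -/
theorem cert_to_scheduler {M : MDP S A} (F : Finset S)
    {k : ℕ} (G : Fin k → Finset S) (hG : ∀ i, G i ⊆ F) (lam : Fin k → ℝ)
    (S' : Finset S) (hS'F : ∀ s ∈ S', s ∉ F) (hinitS' : M.init ∈ S')
    (y : S × A → ℝ)
    (hy0 : ∀ p, 0 ≤ y p)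
    (hyF : ∀ p : S × A, p.1 ∈ F ∨ ¬ M.enabled p.1 p.2 → y p = 0)
    (hyflow : ∀ s, s ∉ F →
      ∑ p : S × A, ((if p.1 = s then (1 : ℝ) else 0) - M.prob p.1 p.2 s) * y p
        ≤ (if s = M.init then 1 else 0))
    (hylam : ∀ i, lam i ≤ ∑ p : S × A, (∑ t ∈ G i, M.prob p.1 p.2 t) * y p)
    (hysupp : ∀ s : S, (∃ a, 0 < y (s, a)) → s ∈ S')
    (M' : MDP (Option S) A) (hsub : IsInducedSubsystem M (S' ∪ F) M') :
    ∃ σ' : Scheduler M', ∀ i, lam i ≤ prReach M' σ' ((G i).image some) := by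
  classical
  obtain ⟨hinitW, hinit', hsink, hen, hprobW, hprobOut, hprobNone⟩ := hsub
  have hsub' : IsInducedSubsystem M (S' ∪ F) M' :=
    ⟨hinitW, hinit', hsink, hen, hprobW, hprobOut, hprobNone⟩
  have hyS' : ∀ p : S × A, p.1 ∉ S' → y p = 0 := by
    intro p hp
    by_contra hne
    exact hp (hysupp p.1 ⟨p.2, lt_of_le_of_ne (hy0 p) (Ne.symm hne)⟩)
  have hyen : ∀ p : S × A, 0 < y p → M.enabled p.1 p.2 := by
    intro p hp
    by_contra hne
    exact absurd (hyF p (Or.inr hne)) (ne_of_gt hp)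
  set z : S → ℝ := fun s => ∑ a, y (s, a) with hzdef
  have hz0 : ∀ s, 0 ≤ z s := fun s => Finset.sum_nonneg fun a _ => hy0 (s, a)
  -- default enabled actions
  set d : Option S → A := fun t => Classical.choose (M'.exists_enabled t) with hd
  have hdval : ∀ t, M'.enabled t (d t) := fun t => Classical.choose_spec (M'.exists_enabled t)
  -- the memoryless scheduler
  set ch : Option S → A → ℝ := fun t a =>
    Option.elim t (if a = d none then (1:ℝ) else 0)
      (fun s => if s ∈ S' ∧ 0 < z s then y (s, a) / z s
        else if a = d (some s) then 1 else 0) with hch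
  have hch_none : ∀ a, ch none a = if a = d none then (1:ℝ) else 0 := fun a => rfl
  have hch_some : ∀ s a, ch (some s) a = if s ∈ S' ∧ 0 < z s then y (s, a) / z s
      else if a = d (some s) then 1 else 0 := fun s a => rfl
  have hch_nonneg : ∀ t a, 0 ≤ ch t a := by
    intro t a
    cases t with
    | none => rw [hch_none]; split <;> norm_num
    | some s =>
      rw [hch_some]
      split
      · exact div_nonneg (hy0 _) (hz0 s)
      · split <;> norm_num
  have hch_sum : ∀ t, ∑ a, ch t a = 1 := by
    intro t
    cases t with
    | none => simp only [hch_none]; simp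
    | some s =>
      simp only [hch_some]
      by_cases hcase : s ∈ S' ∧ 0 < z s
      · simp only [if_pos hcase]
        rw [← Finset.sum_div]
        exact div_self (ne_of_gt hcase.2)
      · simp only [if_neg hcase]
        simp
  have hch_supp : ∀ t a, ch t a ≠ 0 → M'.enabled t a := by
    intro t a hne
    cases t with
    | none =>
      rw [hch_none] at hne
      rcases eq_or_ne a (d none) with rfl | hda
      · exact hdval none
      · exact absurd (if_neg hda) hne
    | some s =>
      rw [hch_some] at hne
      by_cases hcase : s ∈ S' ∧ 0 < z s
      · rw [if_pos hcase] at hne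
        have hy : y (s, a) ≠ 0 := fun h => hne (by rw [h, zero_div])
        have hypos : 0 < y (s, a) := lt_of_le_of_ne (hy0 _) (Ne.symm hy)
        exact (hen s (Finset.mem_union_left _ hcase.1) a).mpr (hyen (s, a) hypos)
      · rw [if_neg hcase] at hne
        rcases eq_or_ne a (d (some s)) with rfl | hda
        · exact hdval (some s)
        · exact absurd (if_neg hda) hne
  set σ : Scheduler M' := ⟨fun _ t a => ch t a, fun _ t a => hch_nonneg t a,
    fun _ t => hch_sum t, fun _ t a h => hch_supp t a h⟩ with hσ
  refine ⟨σ, fun i => ?_⟩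
  set Gim : Finset (Option S) := (G i).image some with hGim
  set x : S → ℝ := fun t => prReachFrom M' σ Gim (some t) with hx
  have hirr := reachAux_hist_irrel M' σ Gim (fun _ _ _ _ => rfl)
  have hx0 : ∀ t, 0 ≤ x t := fun t => M'.prReachFrom_nonneg σ Gim (some t)
  -- the harmonic inequality
  have harmonic : ∀ s ∈ S', ∑ a, y (s, a) * ((∑ t ∈ G i, M.prob s a t)
      + ∑ t ∈ S', M.prob s a t * x t) ≤ z s * x s := by
    intro s hs
    have hsF : s ∉ F := hS'F s hs
    have hsGi : s ∉ G i := fun h => hsF (hG i h)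
    have hsGim : (some s : Option S) ∉ Gim := by simp [hGim, hsGi]
    rcases eq_or_lt_of_le (hz0 s) with hzz | hzz
    · -- z s = 0 : all y (s,a) = 0
      have hall : ∀ a, y (s, a) = 0 := by
        intro a
        have := (Finset.sum_eq_zero_iff_of_nonneg fun a _ => hy0 (s, a)).mp hzz.symm
        exact this a (Finset.mem_univ a)
      rw [← hzz]
      simp [hall]
    · -- z s > 0
      have hchs : ∀ a, ch (some s) a = y (s, a) / z s := fun a => by
        rw [hch_some, if_pos ⟨hs, hzz⟩]
      have claim : ∀ n, ∑ a, y (s, a) * ((∑ t ∈ G i, M.prob s a t)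
          + ∑ t ∈ S', M.prob s a t * reachAux M' σ Gim n [] (some t))
          ≤ z s * reachAux M' σ Gim (n + 1) [] (some s) := by
        intro n
        have hunfold : reachAux M' σ Gim (n + 1) [] (some s)
            = ∑ a, ch (some s) a * ∑ τ, M'.prob (some s) a τ *
              reachAux M' σ Gim n ([] ++ [(some s, a)]) τ := by
          simp only [reachAux, if_neg hsGim]
          rfl
        rw [hunfold, Finset.mul_sum]
        refine Finset.sum_le_sum fun a _ => ?_
        rw [hchs a]
        rw [show z s * (y (s, a) / z s * ∑ τ, M'.prob (some s) a τ *
            reachAux M' σ Gim n ([] ++ [(some s, a)]) τ)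
          = y (s, a) * ∑ τ, M'.prob (some s) a τ *
            reachAux M' σ Gim n ([] ++ [(some s, a)]) τ by
          field_simp]
        rcases eq_or_lt_of_le (hy0 (s, a)) with hya | hya
        · rw [← hya]; simp
        · refine mul_le_mul_of_nonneg_left ?_ (le_of_lt hya)
          -- per-action inequality
          have hena : M.enabled s a := hyen (s, a) hya
          have hsW : s ∈ S' ∪ F := Finset.mem_union_left _ hs
          have hdisj : Disjoint Gim (S'.image some) := by
            rw [Finset.disjoint_left]
            intro τ hτ1 hτ2
            simp only [hGim, Finset.mem_image] at hτ1 hτ2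
            obtain ⟨t1, ht1, rfl⟩ := hτ1
            obtain ⟨t2, ht2, heq⟩ := hτ2
            cases Option.some.inj heq
            exact hS'F _ ht2 (hG i ht1)
          have hsubset : Gim ∪ S'.image some ⊆ Finset.univ := Finset.subset_univ _
          calc (∑ t ∈ G i, M.prob s a t)
              + ∑ t ∈ S', M.prob s a t * reachAux M' σ Gim n [] (some t)
              = ∑ τ ∈ Gim ∪ S'.image some, M'.prob (some s) a τ *
                reachAux M' σ Gim n ([] ++ [(some s, a)]) τ := by
                rw [Finset.sum_union hdisj]
                congr 1
                · rw [hGim, Finset.sum_image (fun u _ v _ h => Option.some.inj h)]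
                  refine Finset.sum_congr rfl fun t ht => ?_
                  rw [hprobW s hsW t (Finset.mem_union_right _ (hG i ht)) a]
                  rw [reachAux_of_mem M' σ Gim (Finset.mem_image_of_mem some ht), mul_one]
                · rw [Finset.sum_image (fun u _ v _ h => Option.some.inj h)]
                  refine Finset.sum_congr rfl fun t ht => ?_
                  rw [hprobW s hsW t (Finset.mem_union_left _ ht) a]
                  rw [hirr n ([] ++ [(some s, a)]) [] (some t)]
            _ ≤ ∑ τ, M'.prob (some s) a τ *
                reachAux M' σ Gim n ([] ++ [(some s, a)]) τ := by
                refine Finset.sum_le_sum_of_subset_of_nonneg hsubset fun τ _ _ =>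
                  mul_nonneg (M'.prob_nonneg _ a τ) (M'.reachAux_nonneg σ Gim n _ τ)
      -- take the limit in n
      have htend : Filter.Tendsto (fun n => ∑ a, y (s, a) * ((∑ t ∈ G i, M.prob s a t)
          + ∑ t ∈ S', M.prob s a t * reachAux M' σ Gim n [] (some t))) Filter.atTop
          (nhds (∑ a, y (s, a) * ((∑ t ∈ G i, M.prob s a t)
          + ∑ t ∈ S', M.prob s a t * x t))) := by
        refine tendsto_finset_sum _ fun a _ => ?_
        refine Filter.Tendsto.const_mul _ ?_
        refine Filter.Tendsto.const_add _ ?_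
        refine tendsto_finset_sum _ fun t _ => ?_
        exact Filter.Tendsto.const_mul _ (M'.tendsto_reachAux σ Gim (some t))
      refine le_of_tendsto htend (Filter.Eventually.of_forall fun n => ?_)
      calc ∑ a, y (s, a) * ((∑ t ∈ G i, M.prob s a t)
            + ∑ t ∈ S', M.prob s a t * reachAux M' σ Gim n [] (some t))
          ≤ z s * reachAux M' σ Gim (n + 1) [] (some s) := claim n
        _ ≤ z s * x s := mul_le_mul_of_nonneg_left
            (M'.reachAux_le_prReachFrom σ Gim (some s) (n + 1)) (hz0 s)
  -- restrict full sums to S' × A sums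
  have hysum : ∀ g : S × A → ℝ, ∑ p : S × A, y p * g p
      = ∑ s ∈ S', ∑ a, y (s, a) * g (s, a) := by
    intro g
    rw [Fintype.sum_prod_type]
    rw [← Finset.sum_subset (Finset.subset_univ S') (fun s _ hs =>
      Finset.sum_eq_zero fun a _ => by rw [hyS' (s, a) hs, zero_mul])]
  have hzrow : ∀ s : S, ∑ p : S × A, (if p.1 = s then (1:ℝ) else 0) * y p = z s := by
    intro s
    rw [Fintype.sum_prod_type]
    rw [Finset.sum_congr rfl fun s' _ => by
      rw [show ∑ a, (if (s' , a).1 = s then (1:ℝ) else 0) * y (s', a)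
          = if s' = s then ∑ a, y (s', a) else 0 by
        split <;> simp_all]]
    rw [Finset.sum_ite_eq' Finset.univ s (fun s' => ∑ a, y (s', a))]
    simp [hzdef]
  -- combine the flow constraints
  have h3 : ∑ s ∈ S', x s * (∑ p : S × A,
        ((if p.1 = s then (1:ℝ) else 0) - M.prob p.1 p.2 s) * y p)
      ≤ x M.init := by
    calc ∑ s ∈ S', x s * (∑ p : S × A,
          ((if p.1 = s then (1:ℝ) else 0) - M.prob p.1 p.2 s) * y p)
        ≤ ∑ s ∈ S', x s * (if s = M.init then 1 else 0) :=
          Finset.sum_le_sum fun s hs =>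
            mul_le_mul_of_nonneg_left (hyflow s (hS'F s hs)) (hx0 s)
      _ = x M.init := by
          rw [Finset.sum_congr rfl fun s _ => (by split <;> simp_all :
            x s * (if s = M.init then (1:ℝ) else 0) = if s = M.init then x s else 0)]
          rw [Finset.sum_ite_eq' S' M.init x, if_pos hinitS']
  -- rearrange h3
  have h3' : ∑ s ∈ S', x s * z s - ∑ s ∈ S', x s * ∑ p : S × A, M.prob p.1 p.2 s * y p
      ≤ x M.init := by
    refine le_trans (le_of_eq ?_) h3
    rw [← Finset.sum_sub_distrib]
    refine Finset.sum_congr rfl fun s _ => ?_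
    rw [← mul_sub]
    congr 1
    rw [← hzrow s, ← Finset.sum_sub_distrib]
    refine Finset.sum_congr rfl fun p _ => by ring
  -- the main chain
  have hA : lam i ≤ ∑ s ∈ S', ∑ a, y (s, a) * ∑ t ∈ G i, M.prob s a t := by
    refine le_trans (hylam i) (le_of_eq ?_)
    rw [← hysum fun p => ∑ t ∈ G i, M.prob p.1 p.2 t]
    exact Finset.sum_congr rfl fun p _ => mul_comm _ _
  have h2 : ∑ s ∈ S', ∑ a, y (s, a) * ∑ t ∈ G i, M.prob s a t
      + ∑ s ∈ S', ∑ a, y (s, a) * ∑ t ∈ S', M.prob s a t * x t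
      ≤ ∑ s ∈ S', x s * z s := by
    rw [← Finset.sum_add_distrib]
    refine le_trans (le_of_eq ?_) (le_trans (Finset.sum_le_sum harmonic)
      (le_of_eq (Finset.sum_congr rfl fun s _ => mul_comm _ _)))
    refine Finset.sum_congr rfl fun s _ => ?_
    rw [← Finset.sum_add_distrib]
    exact Finset.sum_congr rfl fun a _ => by ring
  have hB : ∑ s ∈ S', ∑ a, y (s, a) * ∑ t ∈ S', M.prob s a t * x t
      = ∑ t ∈ S', x t * ∑ p : S × A, M.prob p.1 p.2 t * y p := by
    calc ∑ s ∈ S', ∑ a, y (s, a) * ∑ t ∈ S', M.prob s a t * x t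
        = ∑ s ∈ S', ∑ a, ∑ t ∈ S', y (s, a) * (M.prob s a t * x t) := by
          exact Finset.sum_congr rfl fun s _ => Finset.sum_congr rfl fun a _ =>
            Finset.mul_sum _ _ _
      _ = ∑ t ∈ S', ∑ s ∈ S', ∑ a, y (s, a) * (M.prob s a t * x t) := by
          rw [Finset.sum_congr rfl fun s _ => Finset.sum_comm]
          exact Finset.sum_comm
      _ = ∑ t ∈ S', x t * ∑ p : S × A, M.prob p.1 p.2 t * y p := by
          refine Finset.sum_congr rfl fun t _ => ?_
          rw [show ∑ p : S × A, M.prob p.1 p.2 t * y p = ∑ p : S × A, y p * M.prob p.1 p.2 t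
            from Finset.sum_congr rfl fun p _ => mul_comm _ _]
          rw [hysum fun p => M.prob p.1 p.2 t]
          rw [Finset.mul_sum]
          refine Finset.sum_congr rfl fun s _ => ?_
          rw [Finset.mul_sum]
          exact Finset.sum_congr rfl fun a _ => by ring
  have hgoal : lam i ≤ x M.init := by
    have e1 := hA
    have e2 := h2
    rw [hB] at e2
    linarith
  rw [prReach, hinit']
  exact hgoal

end MDP


namespace MDP

attribute [local instance] Classical.propDecidable
set_option linter.unusedSectionVars false
set_option maxHeartbeats 1000000

variable {S A : Type} [Fintype S] [Fintype A] [DecidableEq S]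

/-- The canonical induced subsystem exists. -/
theorem exists_inducedSubsystem (M : MDP S A) (W : Finset S) (hinitW : M.init ∈ W) :
    ∃ M' : MDP (Option S) A, IsInducedSubsystem M W M' := by
  classical
  refine ⟨⟨some M.init, fun τ a => ?_, ?_, ?_, ?_⟩, ?_⟩
  · -- transitions
    exact Option.elim τ
      (some (fun τ' => if τ' = none then 1 else 0))
      (fun s =>
        if s ∈ W ∧ M.enabled s a then
          some (fun τ' => Option.elim τ' (∑ u ∈ Wᶜ, M.prob s a u)
            (fun u => if u ∈ W then M.prob s a u else 0))
        else if M.enabled s a then some (fun τ' => if τ' = some s then 1 else 0)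
        else none)
  · -- nonneg
    rintro (_ | s) a f hf t
    · simp only [Option.elim] at hf
      cases hf
      dsimp only
      split <;> norm_num
    · simp only [Option.elim] at hf
      by_cases h1 : s ∈ W ∧ M.enabled s a
      · rw [if_pos h1] at hf
        cases hf
        rcases t with _ | u
        · exact Finset.sum_nonneg fun u _ => M.prob_nonneg s a u
        · simp only [Option.elim]
          split
          · exact M.prob_nonneg s a u
          · exact le_refl 0
      · rw [if_neg h1] at hf
        by_cases h2 : M.enabled s a
        · rw [if_pos h2] at hf
          cases hf
          dsimp only
          split <;> norm_num
        · rw [if_neg h2] at hf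
          cases hf
  · -- sum one
    rintro (_ | s) a f hf
    · simp only [Option.elim] at hf
      cases hf
      simp
    · simp only [Option.elim] at hf
      by_cases h1 : s ∈ W ∧ M.enabled s a
      · rw [if_pos h1] at hf
        cases hf
        rw [Fintype.sum_option]
        simp only [Option.elim]
        rw [Finset.sum_ite_mem, Finset.univ_inter]
        rw [add_comm, Finset.sum_add_sum_compl W]
        exact M.sum_prob h1.2
      · rw [if_neg h1] at hf
        by_cases h2 : M.enabled s a
        · rw [if_pos h2] at hf
          cases hf
          simp
        · rw [if_neg h2] at hf
          cases hf
  · -- exists enabled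
    rintro (_ | s)
    · obtain ⟨a, _⟩ := M.exists_enabled M.init
      exact ⟨a, rfl⟩
    · obtain ⟨a, ha⟩ := M.exists_enabled s
      have ha' : M.enabled s a := ha
      refine ⟨a, ?_⟩
      simp only [Option.elim]
      by_cases h1 : s ∈ W ∧ M.enabled s a
      · rw [if_pos h1]; rfl
      · rw [if_neg h1, if_pos ha']; rfl
  · -- IsInducedSubsystem
    refine ⟨hinitW, rfl, ?_, ?_, ?_, ?_, ?_⟩
    · intro a _ t
      rfl
    · intro s hs a
      unfold enabled
      simp only [Option.elim]
      constructor
      · intro h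
        by_contra hen
        rw [if_neg (show ¬(s ∈ W ∧ (M.trans s a).isSome = true) by
            exact fun hc => hen hc.2),
          if_neg (show ¬((M.trans s a).isSome = true) by exact hen)] at h
        simp at h
      · intro hen
        rw [if_pos (show s ∈ W ∧ (M.trans s a).isSome = true by exact ⟨hs, hen⟩)]
        rfl
    · intro s hs t ht a
      unfold prob
      simp only [Option.elim]
      by_cases hen : M.enabled s a
      · rw [if_pos (show s ∈ W ∧ M.enabled s a by exact ⟨hs, hen⟩)]
        simp [ht]
      · rw [if_neg (show ¬(s ∈ W ∧ M.enabled s a) by exact fun hc => hen hc.2), if_neg hen]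
        have htr : M.trans s a = none := Option.not_isSome_iff_eq_none.mp hen
        simp [htr]
    · intro s hs t ht a
      unfold prob
      simp only [Option.elim]
      by_cases hen : M.enabled s a
      · rw [if_pos (show s ∈ W ∧ M.enabled s a by exact ⟨hs, hen⟩)]
        simp [ht]
      · rw [if_neg (show ¬(s ∈ W ∧ M.enabled s a) by exact fun hc => hen hc.2), if_neg hen]
        simp
    · intro s hs a hen
      unfold prob
      simp only [Option.elim]
      rw [if_pos (show s ∈ W ∧ M.enabled s a by exact ⟨hs, hen⟩)]
      simp

end MDP


namespace MDP

attribute [local instance] Classical.propDecidable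
set_option linter.unusedSectionVars false
set_option maxHeartbeats 2000000

variable {S A : Type} [Fintype S] [Fintype A] [DecidableEq S]

theorem scheduler_to_cert {M : MDP S A} (F : Finset S)
    (habs : ∀ s ∈ F, ∀ a, M.enabled s a → M.prob s a s = 1)
    (hinit : M.init ∉ F)
    {k : ℕ} (G : Fin k → Finset S) (hG : ∀ i, G i ⊆ F) (lam : Fin k → ℝ)
    (S' : Finset S) (hS'F : ∀ s ∈ S', s ∉ F) (hinitS' : M.init ∈ S')
    (hall : ∀ M' : MDP (Option S) A, IsInducedSubsystem M (S' ∪ F) M' →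
      ∃ σ' : Scheduler M', ∀ i, lam i ≤ prReach M' σ' ((G i).image some)) :
    ∃ y : S × A → ℝ,
      (∀ p, 0 ≤ y p) ∧
      (∀ p : S × A, p.1 ∈ F ∨ ¬ M.enabled p.1 p.2 → y p = 0) ∧
      (∀ s, s ∉ F →
        ∑ p : S × A, ((if p.1 = s then (1 : ℝ) else 0) - M.prob p.1 p.2 s) * y p
          ≤ (if s = M.init then 1 else 0)) ∧
      (∀ i, lam i ≤ ∑ p : S × A, (∑ t ∈ G i, M.prob p.1 p.2 t) * y p) ∧
      (∀ s : S, (∃ a, 0 < y (s, a)) → s ∈ S') := by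
  classical
  set E' : S × A → Prop := fun p => p.1 ∈ S' ∧ M.enabled p.1 p.2 with hE'
  set B : ({s : S // s ∉ F} ⊕ (Fin k ⊕ (S × A))) → (S × A) → ℝ := fun j p =>
    Sum.elim (fun sb : {s : S // s ∉ F} =>
        (if p.1 = sb.1 then (1:ℝ) else 0) - M.prob p.1 p.2 sb.1)
      (Sum.elim (fun i : Fin k => -(∑ t ∈ G i, M.prob p.1 p.2 t))
        (fun q : S × A => if p = q ∧ ¬ E' q then (1:ℝ) else 0)) j with hB
  set c : ({s : S // s ∉ F} ⊕ (Fin k ⊕ (S × A))) → ℝ :=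
    Sum.elim (fun sb => if sb.1 = M.init then (1:ℝ) else 0)
      (Sum.elim (fun i => -lam i) (fun _ => 0)) with hc
  by_cases hfeas : ∃ y : S × A → ℝ, (∀ p, 0 ≤ y p) ∧
      ∀ j, ∑ p : S × A, B j p * y p ≤ c j
  · -- feasible: extract the certificate
    obtain ⟨y, hy0, hrows⟩ := hfeas
    have hzero : ∀ p : S × A, ¬ E' p → y p = 0 := by
      intro p hp
      have h := hrows (Sum.inr (Sum.inr p))
      simp only [hB, hc, Sum.elim_inr] at h
      have heq : ∑ q : S × A, (if q = p ∧ ¬ E' p then (1:ℝ) else 0) * y q = y p := by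
        rw [Finset.sum_congr rfl fun q _ => by
          rw [show (if q = p ∧ ¬ E' p then (1:ℝ) else 0) = if q = p then 1 else 0 by
            simp [hp]]]
        simp [ite_mul]
      rw [heq] at h
      exact le_antisymm h (hy0 p)
    refine ⟨y, hy0, ?_, ?_, ?_, ?_⟩
    · intro p hp
      refine hzero p ?_
      rcases hp with hp | hp
      · exact fun hc' => hS'F p.1 hc'.1 hp
      · exact fun hc' => hp hc'.2
    · intro s hs
      have h := hrows (Sum.inl ⟨s, hs⟩)
      simpa only [hB, hc, Sum.elim_inl] using h
    · intro i
      have h := hrows (Sum.inr (Sum.inl i))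
      simp only [hB, hc, Sum.elim_inr, Sum.elim_inl] at h
      have heq : ∑ p : S × A, -(∑ t ∈ G i, M.prob p.1 p.2 t) * y p
          = -∑ p : S × A, (∑ t ∈ G i, M.prob p.1 p.2 t) * y p := by
        rw [← Finset.sum_neg_distrib]
        exact Finset.sum_congr rfl fun p _ => by ring
      rw [heq] at h
      linarith
    · intro s ⟨a, hya⟩
      by_contra hs
      exact absurd (hzero (s, a) fun hc' => hs hc'.1) (ne_of_gt hya)
  · -- infeasible: use Farkas and derive a contradiction
    exfalso
    obtain ⟨x, hx0, hxB, hxc⟩ := FarkasAux.farkas B c hfeas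
    set u : Fin k → ℝ := fun i => x (Sum.inr (Sum.inl i)) with hu
    have hu0 : ∀ i, 0 ≤ u i := fun i => hx0 _
    set X : S → ℝ := fun s => if h : s ∈ F then 0 else x (Sum.inl ⟨s, h⟩) with hX
    have hX0 : ∀ s, 0 ≤ X s := by
      intro s
      rw [hX]
      dsimp only
      split
      · exact le_refl 0
      · exact hx0 _
    have hXval : ∀ sb : {s : S // s ∉ F}, x (Sum.inl sb) = X sb.1 := by
      intro sb
      rw [hX]
      dsimp only
      rw [dif_neg sb.2]
    -- the strict inequality from Farkas
    have hstrict : X M.init < ∑ i, u i * lam i := by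
      have h := hxc
      rw [Fintype.sum_sum_type, Fintype.sum_sum_type] at h
      have h3 : ∑ q : S × A, x (Sum.inr (Sum.inr q)) * c (Sum.inr (Sum.inr q)) = 0 := by
        refine Finset.sum_eq_zero fun q _ => ?_
        simp [hc]
      have h2 : ∑ i, x (Sum.inr (Sum.inl i)) * c (Sum.inr (Sum.inl i))
          = -∑ i, u i * lam i := by
        rw [← Finset.sum_neg_distrib]
        refine Finset.sum_congr rfl fun i _ => ?_
        simp [hc, hu]
      have h1 : ∑ sb : {s : S // s ∉ F}, x (Sum.inl sb) * c (Sum.inl sb) = X M.init := by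
        rw [Finset.sum_congr rfl fun sb _ => show x (Sum.inl sb) * c (Sum.inl sb)
              = if sb = (⟨M.init, hinit⟩ : {s : S // s ∉ F}) then x (Sum.inl sb) else 0 by
          by_cases hsb : sb = (⟨M.init, hinit⟩ : {s : S // s ∉ F})
          · subst hsb
            simp [hc]
          · have hne : sb.1 ≠ M.init := fun hh => hsb (Subtype.ext hh)
            simp [hc, hne, hsb]]
        rw [Finset.sum_ite_eq' Finset.univ (⟨M.init, hinit⟩ : {s : S // s ∉ F})
          (fun sb => x (Sum.inl sb)), if_pos (Finset.mem_univ _)]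
        rw [hXval ⟨M.init, hinit⟩]
      rw [h1, h2, h3] at h
      linarith
    -- the dual superharmonicity inequality
    have hkey : ∀ p : S × A, p.1 ∈ S' → M.enabled p.1 p.2 →
        ∑ i, u i * (∑ t ∈ G i, M.prob p.1 p.2 t)
          + ∑ t ∈ Fᶜ, M.prob p.1 p.2 t * X t ≤ X p.1 := by
      intro p hp1 hp2
      have h := hxB p
      rw [Fintype.sum_sum_type, Fintype.sum_sum_type] at h
      have h3 : ∑ q : S × A, x (Sum.inr (Sum.inr q)) * B (Sum.inr (Sum.inr q)) p = 0 := by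
        refine Finset.sum_eq_zero fun q _ => ?_
        have : ¬ (p = q ∧ ¬ E' q) := by
          rintro ⟨rfl, hq⟩
          exact hq ⟨hp1, hp2⟩
        simp [hB, this]
      have h2 : ∑ i, x (Sum.inr (Sum.inl i)) * B (Sum.inr (Sum.inl i)) p
          = -∑ i, u i * (∑ t ∈ G i, M.prob p.1 p.2 t) := by
        rw [← Finset.sum_neg_distrib]
        refine Finset.sum_congr rfl fun i _ => ?_
        simp only [hB, Sum.elim_inr, Sum.elim_inl, hu]
        ring
      have hpF : p.1 ∉ F := hS'F p.1 hp1
      have h1 : ∑ sb : {s : S // s ∉ F}, x (Sum.inl sb) * B (Sum.inl sb) p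
          = X p.1 - ∑ t ∈ Fᶜ, M.prob p.1 p.2 t * X t := by
        simp only [hB, Sum.elim_inl]
        rw [Finset.sum_congr rfl fun sb _ =>
          show x (Sum.inl sb) * ((if p.1 = sb.1 then (1:ℝ) else 0) - M.prob p.1 p.2 sb.1)
              = (if sb = (⟨p.1, hpF⟩ : {s : S // s ∉ F}) then x (Sum.inl sb) else 0)
                - M.prob p.1 p.2 sb.1 * X sb.1 by
          by_cases hsb : sb = (⟨p.1, hpF⟩ : {s : S // s ∉ F})
          · subst hsb
            rw [hXval, if_pos rfl, if_pos rfl]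
            ring
          · have hne : p.1 ≠ sb.1 := fun hh => hsb (Subtype.ext hh.symm)
            rw [hXval, if_neg hne, if_neg hsb]
            ring]
        rw [Finset.sum_sub_distrib]
        congr 1
        · rw [Finset.sum_ite_eq' Finset.univ (⟨p.1, hpF⟩ : {s : S // s ∉ F})
            (fun sb => x (Sum.inl sb)), if_pos (Finset.mem_univ _)]
          exact hXval ⟨p.1, hpF⟩
        · rw [← Finset.sum_subtype Fᶜ (fun t => Finset.mem_compl) 
            (fun t => M.prob p.1 p.2 t * X t)]
      rw [h1, h2, h3] at h
      linarith
    -- get the scheduler from the assumption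
    obtain ⟨M'0, hsub⟩ := M.exists_inducedSubsystem (S' ∪ F)
      (Finset.mem_union_left _ hinitS')
    obtain ⟨σ', hσ'⟩ := hall M'0 hsub
    obtain ⟨hinitW, hinit', hsink, hen, hprobW, hprobOut, hprobNone⟩ := hsub
    have hsub' : IsInducedSubsystem M (S' ∪ F) M'0 :=
      ⟨hinitW, hinit', hsink, hen, hprobW, hprobOut, hprobNone⟩
    have hdisjS'F : Disjoint S' F := Finset.disjoint_left.mpr fun v hv => hS'F v hv
    -- the superharmonic potential
    set Φ : Option S → ℝ := fun τ => Option.elim τ 0 (fun t =>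
      if t ∈ S' then X t
      else if t ∈ F then ∑ i, u i * (if t ∈ G i then (1:ℝ) else 0)
      else ∑ i, u i) with hΦ
    have hΦnone : Φ none = 0 := rfl
    have hΦS' : ∀ t ∈ S', Φ (some t) = X t := by
      intro t ht
      simp [hΦ, ht]
    have hΦF : ∀ t, t ∉ S' → t ∈ F →
        Φ (some t) = ∑ i, u i * (if t ∈ G i then (1:ℝ) else 0) := by
      intro t ht htF
      simp [hΦ, ht, htF]
    have hΦout : ∀ t, t ∉ S' → t ∉ F → Φ (some t) = ∑ i, u i := by
      intro t ht htF
      simp [hΦ, ht, htF]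
    -- Φ bound on one-step expectations from S' states
    have hPhiBound : ∀ t ∈ S', ∀ a, M.enabled t a →
        ∑ τ', M'0.prob (some t) a τ' * Φ τ' ≤ X t := by
      intro t ht a hena
      have htW : t ∈ S' ∪ F := Finset.mem_union_left _ ht
      rw [Fintype.sum_option, hΦnone, mul_zero, zero_add]
      have hsplit : ∑ v : S, M'0.prob (some t) a (some v) * Φ (some v)
          = ∑ v ∈ S' ∪ F, M'0.prob (some t) a (some v) * Φ (some v) := by
        rw [← Finset.sum_add_sum_compl (S' ∪ F)
          (fun v => M'0.prob (some t) a (some v) * Φ (some v))]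
        rw [Finset.sum_eq_zero (s := (S' ∪ F)ᶜ) fun v hv => by
          rw [hprobOut t htW v (Finset.mem_compl.mp hv) a, zero_mul]]
        rw [add_zero]
      rw [hsplit, Finset.sum_union hdisjS'F]
      have hS'part : ∑ v ∈ S', M'0.prob (some t) a (some v) * Φ (some v)
          = ∑ v ∈ S', M.prob t a v * X v := by
        refine Finset.sum_congr rfl fun v hv => ?_
        rw [hprobW t htW v (Finset.mem_union_left _ hv) a, hΦS' v hv]
      have hFpart : ∑ v ∈ F, M'0.prob (some t) a (some v) * Φ (some v)
          = ∑ i, u i * ∑ v ∈ G i, M.prob t a v := by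
        rw [Finset.sum_congr rfl fun v hv => by
          rw [hprobW t htW v (Finset.mem_union_right _ hv) a,
            hΦF v (Finset.disjoint_right.mp hdisjS'F hv) hv, Finset.mul_sum]]
        rw [Finset.sum_comm]
        refine Finset.sum_congr rfl fun i _ => ?_
        rw [Finset.sum_congr rfl fun v _ => by
          rw [show M.prob t a v * (u i * if v ∈ G i then (1:ℝ) else 0)
              = u i * (if v ∈ G i then M.prob t a v else 0) by split <;> ring]]
        rw [← Finset.mul_sum, Finset.sum_ite_mem, Finset.inter_eq_right.mpr (hG i)]
      rw [hS'part, hFpart]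
      have hmono : ∑ v ∈ S', M.prob t a v * X v ≤ ∑ v ∈ Fᶜ, M.prob t a v * X v := by
        refine Finset.sum_le_sum_of_subset_of_nonneg
          (fun v hv => Finset.mem_compl.mpr (hS'F v hv)) fun v _ _ =>
          mul_nonneg (M.prob_nonneg t a v) (hX0 v)
      have := hkey (t, a) ht hena
      simp only at this
      linarith
    -- superharmonicity along reachAux
    have hsuper : ∀ n (h : List (Option S × A)) τ,
        ∑ i, u i * reachAux M'0 σ' ((G i).image some) n h τ ≤ Φ τ := by
      intro n
      induction n with
      | zero =>
        intro h τ
        cases τ with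
        | none =>
          rw [hΦnone]
          refine le_of_eq (Finset.sum_eq_zero fun i _ => ?_)
          rw [show reachAux M'0 σ' ((G i).image some) 0 h none = 0 by
            simp [reachAux], mul_zero]
        | some t =>
          have hra : ∀ i, reachAux M'0 σ' ((G i).image some) 0 h (some t)
              = if t ∈ G i then 1 else 0 := by
            intro i
            simp only [reachAux]
            congr 1
            simp [Finset.mem_image]
          by_cases ht : t ∈ S'
          · rw [hΦS' t ht]
            refine le_trans (le_of_eq (Finset.sum_eq_zero fun i _ => ?_)) (hX0 t)
            rw [hra i, if_neg fun hg => hS'F t ht (hG i hg), mul_zero]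
          · by_cases htF : t ∈ F
            · rw [hΦF t ht htF]
              exact le_of_eq (Finset.sum_congr rfl fun i _ => by rw [hra i])
            · rw [hΦout t ht htF]
              refine Finset.sum_le_sum fun i _ => ?_
              rw [hra i]
              calc u i * (if t ∈ G i then (1:ℝ) else 0) ≤ u i * 1 := by
                    refine mul_le_mul_of_nonneg_left ?_ (hu0 i)
                    split <;> norm_num
                _ = u i := mul_one _
      | succ n ih =>
        intro h τ
        cases τ with
        | none =>
          rw [hΦnone]
          refine le_of_eq (Finset.sum_eq_zero fun i _ => ?_)
          rw [sink_reachAux_zero hsub' σ' (G i) (n+1) h, mul_zero]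
        | some t =>
          by_cases ht : t ∈ S'
          · -- the main case
            have htF : t ∉ F := hS'F t ht
            have hnotmem : ∀ i, (some t : Option S) ∉ (G i).image some := by
              intro i
              simp only [Finset.mem_image]
              rintro ⟨v, hv, heq⟩
              cases Option.some.inj heq
              exact htF (hG i hv)
            have hra : ∀ i, reachAux M'0 σ' ((G i).image some) (n+1) h (some t)
                = ∑ a, σ'.choice h (some t) a * ∑ τ', M'0.prob (some t) a τ' *
                  reachAux M'0 σ' ((G i).image some) n (h ++ [(some t, a)]) τ' := by
              intro i
              simp only [reachAux, if_neg (hnotmem i)]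
            rw [hΦS' t ht]
            calc ∑ i, u i * reachAux M'0 σ' ((G i).image some) (n+1) h (some t)
                = ∑ a, σ'.choice h (some t) a * ∑ i, u i *
                  ∑ τ', M'0.prob (some t) a τ' *
                    reachAux M'0 σ' ((G i).image some) n (h ++ [(some t, a)]) τ' := by
                  rw [Finset.sum_congr rfl fun i _ => by rw [hra i, Finset.mul_sum]]
                  rw [Finset.sum_comm]
                  refine Finset.sum_congr rfl fun a _ => ?_
                  rw [Finset.mul_sum]
                  exact Finset.sum_congr rfl fun i _ => by ring
              _ ≤ ∑ a, σ'.choice h (some t) a * X t := by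
                  refine Finset.sum_le_sum fun a _ => ?_
                  rcases eq_or_ne (σ'.choice h (some t) a) 0 with h0 | h0
                  · rw [h0, zero_mul, zero_mul]
                  · refine mul_le_mul_of_nonneg_left ?_
                      (σ'.choice_nonneg h (some t) a)
                    have hena : M.enabled t a :=
                      (hen t (Finset.mem_union_left _ ht) a).mp
                        (σ'.choice_support h (some t) a h0)
                    calc ∑ i, u i * ∑ τ', M'0.prob (some t) a τ' *
                          reachAux M'0 σ' ((G i).image some) n (h ++ [(some t, a)]) τ'
                        = ∑ τ', M'0.prob (some t) a τ' * ∑ i, u i *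
                          reachAux M'0 σ' ((G i).image some) n (h ++ [(some t, a)]) τ' := by
                          rw [Finset.sum_congr rfl fun i _ => Finset.mul_sum _ _ _]
                          rw [Finset.sum_comm]
                          refine Finset.sum_congr rfl fun τ' _ => ?_
                          rw [Finset.mul_sum]
                          exact Finset.sum_congr rfl fun i _ => by ring
                      _ ≤ ∑ τ', M'0.prob (some t) a τ' * Φ τ' :=
                          Finset.sum_le_sum fun τ' _ => mul_le_mul_of_nonneg_left
                            (ih (h ++ [(some t, a)]) τ') (M'0.prob_nonneg _ a τ')
                      _ ≤ X t := hPhiBound t ht a hena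
              _ = X t := by rw [← Finset.sum_mul, σ'.choice_sum_one h (some t), one_mul]
          · by_cases htF : t ∈ F
            · rw [hΦF t ht htF]
              refine le_of_eq (Finset.sum_congr rfl fun i _ => ?_)
              by_cases hg : t ∈ G i
              · rw [reachAux_of_mem M'0 σ' ((G i).image some)
                  (Finset.mem_image_of_mem some hg), if_pos hg]
              · rw [absorb_reachAux_zero hsub' σ' (G i)
                  (Finset.mem_union_right _ htF) (fun a ha => habs t htF a ha) hg
                  (n+1) h, if_neg hg]
            · rw [hΦout t ht htF]
              refine Finset.sum_le_sum fun i _ => ?_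
              calc u i * reachAux M'0 σ' ((G i).image some) (n+1) h (some t)
                  ≤ u i * 1 := mul_le_mul_of_nonneg_left
                    (M'0.reachAux_le_one σ' _ (n+1) h (some t)) (hu0 i)
                _ = u i := mul_one _
    -- conclude
    have hfinal : ∑ i, u i * prReach M'0 σ' ((G i).image some) ≤ X M.init := by
      have htend : Filter.Tendsto (fun n => ∑ i, u i *
          reachAux M'0 σ' ((G i).image some) n [] (some M.init)) Filter.atTop
          (nhds (∑ i, u i * prReach M'0 σ' ((G i).image some))) := by
        refine tendsto_finset_sum _ fun i _ => Filter.Tendsto.const_mul _ ?_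
        rw [prReach, hinit']
        exact M'0.tendsto_reachAux σ' ((G i).image some) (some M.init)
      refine le_of_tendsto htend (Filter.Eventually.of_forall fun n => ?_)
      calc ∑ i, u i * reachAux M'0 σ' ((G i).image some) n [] (some M.init)
          ≤ Φ (some M.init) := hsuper n [] (some M.init)
        _ = X M.init := hΦS' M.init hinitS'
    have hlam : ∑ i, u i * lam i ≤ ∑ i, u i * prReach M'0 σ' ((G i).image some) :=
      Finset.sum_le_sum fun i _ => mul_le_mul_of_nonneg_left (hσ' i) (hu0 i)
    linarith

end MDP


/-- Witnessing subsystems from Farkas certificates, existential conjunctive case: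
there is a certificate `y ∈ H(λ)` with state support contained in `S'` iff some
scheduler of the subsystem induced by `S'` (together with the targets `F`) satisfies
all lower-bounded reachability predicates. -/
theorem exists_conj_reach_witnessing_subsystem {S A : Type} [Fintype S] [Fintype A]
    [DecidableEq S] (M : MDP S A) (F : Finset S)
    (habs : ∀ s ∈ F, ∀ a, M.enabled s a → M.prob s a s = 1)
    (hform : ∀ s, ∃ σ : MDP.Scheduler M, 0 < MDP.prReachFrom M σ F s)
    (hinit : M.init ∉ F)
    (hECfree : ∀ C : Finset (S × A), MDP.IsEC M C → ∀ p ∈ C, p.1 ∈ F)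
    {k : ℕ} (G : Fin k → Finset S) (hG : ∀ i, G i ⊆ F) (lam : Fin k → ℝ)
    (S' : Finset S) (hS'F : ∀ s ∈ S', s ∉ F) (hinitS' : M.init ∈ S') :
    (∃ y : S × A → ℝ,
        (∀ p, 0 ≤ y p) ∧
        (∀ p : S × A, p.1 ∈ F ∨ ¬ M.enabled p.1 p.2 → y p = 0) ∧
        (∀ s, s ∉ F →
          ∑ p : S × A, ((if p.1 = s then (1 : ℝ) else 0) - M.prob p.1 p.2 s) * y p
            ≤ (if s = M.init then 1 else 0)) ∧
        (∀ i, lam i ≤ ∑ p : S × A, (∑ t ∈ G i, M.prob p.1 p.2 t) * y p) ∧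
        (∀ s : S, (∃ a, 0 < y (s, a)) → s ∈ S')) ↔
      (∀ M' : MDP (Option S) A, MDP.IsInducedSubsystem M (S' ∪ F) M' →
        ∃ σ' : MDP.Scheduler M', ∀ i, lam i ≤ MDP.prReach M' σ' ((G i).image some)) := by
  constructor
  · rintro ⟨y, hy0, hyF, hyflow, hylam, hysupp⟩ M' hsub
    exact MDP.cert_to_scheduler (M := M) F G hG lam S' hS'F hinitS' y hy0 hyF hyflow hylam
      hysupp M' hsub
  · intro hall
    exact MDP.scheduler_to_cert (M := M) F habs hinit G hG lam S' hS'F hinitS' hall
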